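/- Let n and x be natural numbers with x ≤ n. For every a ∈ (0, 1), the function a ↦ I_n(a, x) is differentiable at a with derivative a^{x+1} ∫₀¹ t^{x+2} (1 − a t)^{n−x} dt, and this derivative is strictly positive. -/

import Mathlib

/-- `I_n(a, x) = a^{x+2} ∫₀¹ t^{x+1} (1 − t) (1 − a t)^{n−x} dt`. -/
noncomputable def In (n x : ℕ) (a : ℝ) : ℝ :=
  a ^ (x + 2) * ∫ t in (0 : ℝ)..1, t ^ (x + 1) * (1 - t) * (1 - a * t) ^ (n - x)

private lemma cov1 (n x : ℕ) (b : ℝ) (hb : b ≠ 0) :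
    In n x b = (∫ u in (0:ℝ)..b, u ^ (x + 1) * (1 - u) ^ (n - x))
      - b⁻¹ * ∫ u in (0:ℝ)..b, u ^ (x + 2) * (1 - u) ^ (n - x) := by
  have h1 : (Continuous fun u : ℝ => u ^ (x + 1) * (1 - u) ^ (n - x)) := by continuity
  have h2 : (Continuous fun u : ℝ => u ^ (x + 2) * (1 - u) ^ (n - x)) := by continuity
  have key : (∫ t in (0:ℝ)..1, t ^ (x + 1) * (1 - t) * (1 - b * t) ^ (n - x))
      = (b ^ (x + 3))⁻¹ *
        ∫ u in (0:ℝ)..b, u ^ (x + 1) * (b - u) * (1 - u) ^ (n - x) := by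
    have : ∀ t : ℝ, t ^ (x + 1) * (1 - t) * (1 - b * t) ^ (n - x)
        = (b ^ (x + 2))⁻¹ * ((b * t) ^ (x + 1) * (b - b * t) * (1 - b * t) ^ (n - x)) := by
      intro t
      have : (b * t) ^ (x + 1) * (b - b * t) = b ^ (x + 2) * (t ^ (x + 1) * (1 - t)) := by
        ring
      rw [this]
      field_simp
    simp_rw [this]
    rw [intervalIntegral.integral_const_mul,
      intervalIntegral.integral_comp_mul_left
        (fun u => u ^ (x + 1) * (b - u) * (1 - u) ^ (n - x)) hb]
    rw [mul_zero, mul_one, smul_eq_mul, ← mul_assoc, ← mul_inv, ← pow_succ]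
  have hsplit : (∫ u in (0:ℝ)..b, u ^ (x + 1) * (b - u) * (1 - u) ^ (n - x))
      = b * (∫ u in (0:ℝ)..b, u ^ (x + 1) * (1 - u) ^ (n - x))
        - ∫ u in (0:ℝ)..b, u ^ (x + 2) * (1 - u) ^ (n - x) := by
    rw [← intervalIntegral.integral_const_mul, ← intervalIntegral.integral_sub
      (f := fun u => b * (u ^ (x + 1) * (1 - u) ^ (n - x))) ((continuous_const.mul h1).intervalIntegrable _ _) (h2.intervalIntegrable _ _)]
    congr 1; ext u; ring
  rw [In, key, hsplit]
  field_simp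
  ring

private lemma cov2 (n x : ℕ) (b : ℝ) (hb : b ≠ 0) :
    (∫ t in (0:ℝ)..1, t ^ (x + 2) * (1 - b * t) ^ (n - x))
      = (b ^ (x + 3))⁻¹ * ∫ u in (0:ℝ)..b, u ^ (x + 2) * (1 - u) ^ (n - x) := by
  have : ∀ t : ℝ, t ^ (x + 2) * (1 - b * t) ^ (n - x)
      = (b ^ (x + 3))⁻¹ * (b * ((b * t) ^ (x + 2) * (1 - b * t) ^ (n - x))) := by
    intro t
    have : b * ((b * t) ^ (x + 2) * (1 - b * t) ^ (n - x))
        = b ^ (x + 3) * (t ^ (x + 2) * (1 - b * t) ^ (n - x)) := by ring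
    rw [this]
    field_simp
  simp_rw [this]
  rw [intervalIntegral.integral_const_mul, intervalIntegral.integral_const_mul,
    intervalIntegral.integral_comp_mul_left
      (fun u => u ^ (x + 2) * (1 - u) ^ (n - x)) hb]
  field_simp
  rw [mul_zero, smul_eq_mul, ← mul_assoc, mul_one_div_cancel hb, one_mul]

/-- On `(0,1)`, `a ↦ I_n(a, x)` has derivative `a^{x+1} ∫₀¹ t^{x+2} (1 − a t)^{n−x} dt`,
which is strictly positive. -/
theorem In_hasDerivAt_and_pos (n x : ℕ) (hx : x ≤ n) (a : ℝ) (ha : a ∈ Set.Ioo (0 : ℝ) 1) :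
    HasDerivAt (fun a => In n x a)
      (a ^ (x + 1) * ∫ t in (0 : ℝ)..1, t ^ (x + 2) * (1 - a * t) ^ (n - x)) a ∧
    0 < a ^ (x + 1) * ∫ t in (0 : ℝ)..1, t ^ (x + 2) * (1 - a * t) ^ (n - x) := by
  obtain ⟨ha0, ha1⟩ := ha
  have hane : a ≠ 0 := ne_of_gt ha0
  set f₁ : ℝ → ℝ := fun u => u ^ (x + 1) * (1 - u) ^ (n - x) with hf₁
  set f₂ : ℝ → ℝ := fun u => u ^ (x + 2) * (1 - u) ^ (n - x) with hf₂
  have h1 : Continuous f₁ := by continuity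
  have h2 : Continuous f₂ := by continuity
  set G : ℝ := ∫ u in (0:ℝ)..a, f₂ u with hG
  -- positivity of G
  have hGpos : 0 < G := by
    apply intervalIntegral.intervalIntegral_pos_of_pos_on (h2.intervalIntegrable _ _) _ ha0
    intro u hu
    have hu1 : u < 1 := lt_trans hu.2 ha1
    exact mul_pos (pow_pos hu.1 _) (pow_pos (by linarith) _)
  -- derivatives of the two primitive functions
  have hF : HasDerivAt (fun b => ∫ u in (0:ℝ)..b, f₁ u) (f₁ a) a :=
    intervalIntegral.integral_hasDerivAt_right (h1.intervalIntegrable _ _)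
      (h1.stronglyMeasurableAtFilter _ _) h1.continuousAt
  have hGd : HasDerivAt (fun b => ∫ u in (0:ℝ)..b, f₂ u) (f₂ a) a :=
    intervalIntegral.integral_hasDerivAt_right (h2.intervalIntegrable _ _)
      (h2.stronglyMeasurableAtFilter _ _) h2.continuousAt
  have hinv : HasDerivAt (fun b : ℝ => b⁻¹) (-(a ^ 2)⁻¹) a := by
    simpa using hasDerivAt_inv hane
  have hprod : HasDerivAt (fun b => b⁻¹ * ∫ u in (0:ℝ)..b, f₂ u)
      (-(a ^ 2)⁻¹ * G + a⁻¹ * f₂ a) a := hinv.mul hGd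
  have hmain : HasDerivAt (fun b => (∫ u in (0:ℝ)..b, f₁ u) - b⁻¹ * ∫ u in (0:ℝ)..b, f₂ u)
      (f₁ a - (-(a ^ 2)⁻¹ * G + a⁻¹ * f₂ a)) a := hF.sub hprod
  have hval : f₁ a - (-(a ^ 2)⁻¹ * G + a⁻¹ * f₂ a)
      = a ^ (x + 1) * ∫ t in (0 : ℝ)..1, t ^ (x + 2) * (1 - a * t) ^ (n - x) := by
    rw [cov2 n x a hane]
    have hf1f2 : f₁ a - a⁻¹ * f₂ a = 0 := by
      simp only [hf₁, hf₂]
      field_simp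
      ring
    have : f₁ a - (-(a ^ 2)⁻¹ * G + a⁻¹ * f₂ a) = (f₁ a - a⁻¹ * f₂ a) + (a ^ 2)⁻¹ * G := by
      ring
    rw [this, hf1f2, zero_add, ← hG]
    field_simp
    ring
  have heq : (fun b => In n x b)
      =ᶠ[nhds a] (fun b => (∫ u in (0:ℝ)..b, f₁ u) - b⁻¹ * ∫ u in (0:ℝ)..b, f₂ u) := by
    filter_upwards [isOpen_Ioi.mem_nhds (show a ∈ Set.Ioi (0:ℝ) from ha0)] with b hb
    exact cov1 n x b (ne_of_gt hb)
  constructor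
  · exact (hval ▸ hmain).congr_of_eventuallyEq heq
  · rw [cov2 n x a hane, ← hG]
    positivity
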